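/- Let A be an algebra over a field F and φ : A → A a linear map. Then there exists a unique family of multilinear maps, indexed by k-tuples of nonnegative integers (n₁,…,n_k), sending (a₁,…,a_k) ∈ A^k to [n₁,…,n_k; a₁,…,a_k] ∈ A, satisfying: (MP1) φ([n₁,…,n_k; a₁,…,a_k]) = [n₁+1,…,n_k+1; a₁,…,a_k], and (MP2) whenever n_ℓ = 0, [n₁,…,n_k; a₁,…,a_k] = [n₁,…,n_{ℓ-1}; a₁,…,a_{ℓ-1}] · a_ℓ · [n_{ℓ+1},…,n_k; a_{ℓ+1},…,a_k] (with the convention that an empty bracket is omitted). -/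

import Mathlib

/-- A family of "moment polynomials" for a linear map `φ : A → A`:
maps indexed by tuples of nonnegative integers (encoded as lists), multilinear
in the algebra entries, satisfying the axioms MP1 and MP2 of Arveson. -/
structure MomentFamily (F : Type*) {A : Type*} [Field F] [Ring A] [Algebra F A]
    (φ : A →ₗ[F] A) where
  M : List ℕ → List A → A
  map_add : ∀ (ns : List ℕ) (xs : List A) (a b : A) (ys : List A),
    (xs ++ a :: ys).length = ns.length →
    M ns (xs ++ (a + b) :: ys) = M ns (xs ++ a :: ys) + M ns (xs ++ b :: ys)
  map_smul : ∀ (ns : List ℕ) (xs : List A) (c : F) (a : A) (ys : List A),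
    (xs ++ a :: ys).length = ns.length →
    M ns (xs ++ (c • a) :: ys) = c • M ns (xs ++ a :: ys)
  mp1 : ∀ (ns : List ℕ) (as : List A), as.length = ns.length →
    φ (M ns as) = M (ns.map (· + 1)) as
  mp2_single : ∀ a : A, M [0] [a] = a
  mp2_left : ∀ (ns : List ℕ) (a : A) (as : List A), ns ≠ [] → as.length = ns.length →
    M (0 :: ns) (a :: as) = a * M ns as
  mp2_right : ∀ (ns : List ℕ) (a : A) (as : List A), ns ≠ [] → as.length = ns.length →
    M (ns ++ [0]) (as ++ [a]) = M ns as * a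
  mp2_mid : ∀ (ns ms : List ℕ) (a : A) (as bs : List A), ns ≠ [] → ms ≠ [] →
    as.length = ns.length → bs.length = ms.length →
    M (ns ++ 0 :: ms) (as ++ a :: bs) = M ns as * a * M ms bs



section Helpers

/-- Decompose a list at index `n`. -/
lemma take_getD_drop {α : Type*} (l : List α) (d : α) (n : ℕ) (h : n < l.length) :
    l.take n ++ l.getD n d :: l.drop (n + 1) = l := by
  rw [List.getD_eq_getElem l d h, List.getElem_cons_drop, List.take_append_drop]

lemma first_zero_spec {ns : List ℕ} (h : 0 ∈ ns) :
    ns.takeWhile (· ≠ 0) ++ 0 :: (ns.dropWhile (· ≠ 0)).tail = ns ∧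
      0 ∉ ns.takeWhile (· ≠ 0) := by
  have hd : ns.dropWhile (· ≠ 0) ≠ [] := by
    intro he
    have := (List.dropWhile_eq_nil_iff.mp he) 0 h
    simp at this
  have hhead : (ns.dropWhile (· ≠ 0)).head hd = 0 := by
    have := List.head_dropWhile_not (· ≠ 0) (l := ns) hd
    simpa using this
  have hdw : 0 :: (ns.dropWhile (· ≠ 0)).tail = ns.dropWhile (· ≠ 0) := by
    have h2 := List.cons_head_tail hd
    rw [hhead] at h2; exact h2
  constructor
  · rw [hdw, List.takeWhile_append_dropWhile]
  · intro hmem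
    have := List.mem_takeWhile_imp hmem
    simp at this

lemma sum_map_pred {ns : List ℕ} (h : 0 ∉ ns) :
    (ns.map (· - 1)).sum + ns.length = ns.sum := by
  induction ns with
  | nil => simp
  | cons n t ih =>
    simp only [List.mem_cons, not_or] at h
    have hn : n ≠ 0 := fun he => h.1 he.symm
    have := ih h.2
    simp only [List.map_cons, List.sum_cons, List.length_cons]
    omega

lemma map_pred_succ {ns : List ℕ} (h : 0 ∉ ns) :
    (ns.map (· - 1)).map (· + 1) = ns := by
  rw [List.map_map]
  apply List.map_congr_left (g := id) ?_ |>.trans (List.map_id ns)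
  intro n hn
  have : n ≠ 0 := fun he => h (he ▸ hn)
  simp only [Function.comp_apply, id_eq]; omega

end Helpers

section Def

variable {F : Type*} {A : Type*} [Field F] [Ring A] [Algebra F A]

/-- Auxiliary moment polynomial: split at the first zero, or peel `φ`. -/
def momAux (φ : A →ₗ[F] A) (ns : List ℕ) (as : List A) : A :=
  if hns : ns = [] then 1
  else if h : 0 ∈ ns then
    momAux φ (ns.takeWhile (· ≠ 0)) (as.take (ns.takeWhile (· ≠ 0)).length) *
      as.getD (ns.takeWhile (· ≠ 0)).length 0 *
      momAux φ ((ns.dropWhile (· ≠ 0)).tail) (as.drop ((ns.takeWhile (· ≠ 0)).length + 1))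
  else φ (momAux φ (ns.map (· - 1)) as)
termination_by ns.length + ns.sum
decreasing_by
  · obtain ⟨he, -⟩ := first_zero_spec h
    have hl := congrArg List.length he
    have hs := congrArg List.sum he
    simp only [List.length_append, List.sum_append, List.length_cons, List.sum_cons] at hl hs
    omega
  · obtain ⟨he, -⟩ := first_zero_spec h
    have hl := congrArg List.length he
    have hs := congrArg List.sum he
    simp only [List.length_append, List.sum_append, List.length_cons, List.sum_cons] at hl hs
    omega
  · have hs := sum_map_pred h
    have : ns.length ≠ 0 := by simpa using hns
    simp only [List.length_map, List.length_attach, List.map_attach_eq_pmap, List.pmap_eq_map]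
    omega

end Def

section Split

variable {F : Type*} {A : Type*} [Field F] [Ring A] [Algebra F A]

lemma takeWhile_app {p : List ℕ} (h : 0 ∉ p) (q : List ℕ) :
    (p ++ 0 :: q).takeWhile (· ≠ 0) = p ∧ (p ++ 0 :: q).dropWhile (· ≠ 0) = 0 :: q := by
  induction p with
  | nil => simp [List.takeWhile_cons, List.dropWhile_cons]
  | cons n t ih =>
    simp only [List.mem_cons, not_or] at h
    have hn : n ≠ 0 := fun he => h.1 he.symm
    obtain ⟨h1, h2⟩ := ih h.2
    simp only [ne_eq, decide_not] at h1 h2 ⊢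
    simp [List.takeWhile_cons, List.dropWhile_cons, hn, h1, h2]

lemma getD_append_len {α : Type*} (as : List α) (a : α) (bs : List α) (d : α) :
    (as ++ a :: bs).getD as.length d = a := by
  induction as with
  | nil => rfl
  | cons x t ih => simpa using ih

lemma drop_append_len {α : Type*} (as : List α) (a : α) (bs : List α) :
    (as ++ a :: bs).drop (as.length + 1) = bs := by
  induction as with
  | nil => rfl
  | cons x t ih => simpa using ih

lemma take_append_len {α : Type*} (as : List α) (l : List α) :
    (as ++ l).take as.length = as := List.take_left (l₁ := as) (l₂ := l)

lemma exists_first_zero {ns : List ℕ} (h : 0 ∈ ns) :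
    ∃ p q, p ++ 0 :: q = ns ∧ 0 ∉ p :=
  ⟨_, _, (first_zero_spec h).1, (first_zero_spec h).2⟩

theorem momAux_split (φ : A →ₗ[F] A) (p q : List ℕ) (as : List A) (a : A) (bs : List A)
    (hlen : as.length = p.length) :
    momAux φ (p ++ 0 :: q) (as ++ a :: bs) = momAux φ p as * a * momAux φ q bs := by
  by_cases h0 : 0 ∈ p
  · obtain ⟨p₁, p₂, hpe, hp1⟩ := exists_first_zero h0
    have hl := congrArg List.length hpe
    have hs := congrArg List.sum hpe
    simp only [List.length_append, List.sum_append, List.length_cons, List.sum_cons] at hl hs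
    have hℓ : p₁.length < as.length := by omega
    have has := take_getD_drop as 0 p₁.length hℓ
    have hlen₁ : (as.take p₁.length).length = p₁.length := by
      rw [List.length_take]; omega
    have hlen₂ : (as.drop (p₁.length + 1)).length = p₂.length := by
      rw [List.length_drop]; omega
    set as₁ := as.take p₁.length
    set m := as.getD p₁.length 0
    set as₂ := as.drop (p₁.length + 1)
    calc momAux φ (p ++ 0 :: q) (as ++ a :: bs)
        = momAux φ (p₁ ++ 0 :: (p₂ ++ 0 :: q)) (as₁ ++ m :: (as₂ ++ a :: bs)) := by
          rw [← hpe, ← has]; simp only [List.cons_append, List.append_assoc]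
      _ = momAux φ p₁ as₁ * m * momAux φ (p₂ ++ 0 :: q) (as₂ ++ a :: bs) :=
          momAux_split φ p₁ (p₂ ++ 0 :: q) as₁ m (as₂ ++ a :: bs) hlen₁
      _ = momAux φ p₁ as₁ * m * (momAux φ p₂ as₂ * a * momAux φ q bs) := by
          rw [momAux_split φ p₂ q as₂ a bs hlen₂]
      _ = momAux φ (p₁ ++ 0 :: p₂) (as₁ ++ m :: as₂) * a * momAux φ q bs := by
          rw [momAux_split φ p₁ p₂ as₁ m as₂ hlen₁]; simp only [mul_assoc]
      _ = momAux φ p as * a * momAux φ q bs := by rw [hpe, has]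
  · have hne : p ++ 0 :: q ≠ [] := by simp
    have hmem : 0 ∈ p ++ 0 :: q := by simp
    obtain ⟨h1, h2⟩ := takeWhile_app h0 q
    rw [momAux, dif_neg hne, dif_pos hmem, h1, h2]
    simp only [List.tail_cons]
    rw [← hlen, take_append_len, getD_append_len, drop_append_len]
termination_by p.length + p.sum
decreasing_by all_goals
  (simp only [List.length_append, List.length_cons, List.sum_append, List.sum_cons,
    List.length_take] at *; omega)

end Split

section Multilinear

variable {F : Type*} {A : Type*} [Field F] [Ring A] [Algebra F A]

lemma momAux_of_pos (φ : A →ₗ[F] A) {ns : List ℕ} (hne : ns ≠ []) (h0 : 0 ∉ ns)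
    (as : List A) : momAux φ ns as = φ (momAux φ (ns.map (· - 1)) as) := by
  rw [momAux, dif_neg hne, dif_neg h0]

lemma exists_decomp {α : Type*} (l : List α) (d : α) (t : ℕ) (ht : t < l.length) :
    ∃ l₁ m l₂, l = l₁ ++ m :: l₂ ∧ l₁.length = t ∧ l₂.length + t + 1 = l.length :=
  ⟨l.take t, l.getD t d, l.drop (t + 1), (take_getD_drop l d t ht).symm,
    by rw [List.length_take]; omega, by rw [List.length_drop]; omega⟩

theorem momAux_add (φ : A →ₗ[F] A) (ns : List ℕ) (xs : List A) (a b : A) (ys : List A)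
    (hlen : (xs ++ a :: ys).length = ns.length) :
    momAux φ ns (xs ++ (a + b) :: ys) =
      momAux φ ns (xs ++ a :: ys) + momAux φ ns (xs ++ b :: ys) := by
  simp only [List.length_append, List.length_cons] at hlen
  have hne : ns ≠ [] := by intro h; subst h; simp at hlen
  by_cases h0 : 0 ∈ ns
  · obtain ⟨p, q, hpe, hp1⟩ := exists_first_zero h0
    have hl := congrArg List.length hpe
    have hsum := congrArg List.sum hpe
    simp only [List.length_append, List.sum_append, List.length_cons, List.sum_cons]
      at hl hsum
    rcases lt_trichotomy xs.length p.length with hcase | hcase | hcase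
    · obtain ⟨ys₁, m, ys₂, hys, hl1, hl2⟩ :=
        exists_decomp ys 0 (p.length - xs.length - 1) (by omega)
      subst hys
      have key : ∀ c : A, momAux φ ns (xs ++ c :: (ys₁ ++ m :: ys₂)) =
          momAux φ p (xs ++ c :: ys₁) * m * momAux φ q ys₂ := by
        intro c
        rw [← hpe, show xs ++ c :: (ys₁ ++ m :: ys₂) = (xs ++ c :: ys₁) ++ m :: ys₂ by simp]
        exact momAux_split φ p q (xs ++ c :: ys₁) m ys₂ (by simp; omega)
      rw [key, key, key,
        momAux_add φ p xs a b ys₁ (by simp; omega)]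
      simp [add_mul]
    · have key : ∀ c : A, momAux φ ns (xs ++ c :: ys) =
          momAux φ p xs * c * momAux φ q ys := by
        intro c; rw [← hpe]; exact momAux_split φ p q xs c ys hcase
      rw [key, key, key]
      simp [mul_add, add_mul]
    · obtain ⟨xs₁, m, xs₂, hxs, hl1, hl2⟩ := exists_decomp xs 0 p.length (by omega)
      subst hxs
      have key : ∀ c : A, momAux φ ns ((xs₁ ++ m :: xs₂) ++ c :: ys) =
          momAux φ p xs₁ * m * momAux φ q (xs₂ ++ c :: ys) := by
        intro c
        rw [← hpe, show (xs₁ ++ m :: xs₂) ++ c :: ys = xs₁ ++ m :: (xs₂ ++ c :: ys) by simp]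
        exact momAux_split φ p q xs₁ m (xs₂ ++ c :: ys) hl1
      rw [key, key, key,
        momAux_add φ q xs₂ a b ys (by simp; omega)]
      simp [mul_add]
  · rw [momAux_of_pos φ hne h0, momAux_of_pos φ hne h0, momAux_of_pos φ hne h0,
      momAux_add φ (ns.map (· - 1)) xs a b ys (by simp; omega), map_add]
termination_by ns.length + ns.sum
decreasing_by
  · simp only [List.length_append, List.length_cons, List.sum_append, List.sum_cons] at *; omega
  · simp only [List.length_append, List.length_cons, List.sum_append, List.sum_cons] at *; omega
  · simp only [List.length_map]
    have h1 := sum_map_pred h0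
    have h2 : ns.length ≠ 0 := by simpa using hne
    omega

end Multilinear

section Smul

variable {F : Type*} {A : Type*} [Field F] [Ring A] [Algebra F A]

theorem momAux_smul (φ : A →ₗ[F] A) (ns : List ℕ) (xs : List A) (c : F) (a : A) (ys : List A)
    (hlen : (xs ++ a :: ys).length = ns.length) :
    momAux φ ns (xs ++ (c • a) :: ys) = c • momAux φ ns (xs ++ a :: ys) := by
  simp only [List.length_append, List.length_cons] at hlen
  have hne : ns ≠ [] := by intro h; subst h; simp at hlen
  by_cases h0 : 0 ∈ ns
  · obtain ⟨p, q, hpe, hp1⟩ := exists_first_zero h0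
    have hl := congrArg List.length hpe
    have hsum := congrArg List.sum hpe
    simp only [List.length_append, List.sum_append, List.length_cons, List.sum_cons]
      at hl hsum
    rcases lt_trichotomy xs.length p.length with hcase | hcase | hcase
    · obtain ⟨ys₁, m, ys₂, hys, hl1, hl2⟩ :=
        exists_decomp ys 0 (p.length - xs.length - 1) (by omega)
      subst hys
      have key : ∀ d : A, momAux φ ns (xs ++ d :: (ys₁ ++ m :: ys₂)) =
          momAux φ p (xs ++ d :: ys₁) * m * momAux φ q ys₂ := by
        intro d
        rw [← hpe, show xs ++ d :: (ys₁ ++ m :: ys₂) = (xs ++ d :: ys₁) ++ m :: ys₂ by simp]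
        exact momAux_split φ p q (xs ++ d :: ys₁) m ys₂ (by simp; omega)
      rw [key, key, momAux_smul φ p xs c a ys₁ (by simp; omega)]
      simp [smul_mul_assoc]
    · have key : ∀ d : A, momAux φ ns (xs ++ d :: ys) =
          momAux φ p xs * d * momAux φ q ys := by
        intro d; rw [← hpe]; exact momAux_split φ p q xs d ys hcase
      rw [key, key]
      simp [smul_mul_assoc, mul_smul_comm]
    · obtain ⟨xs₁, m, xs₂, hxs, hl1, hl2⟩ := exists_decomp xs 0 p.length (by omega)
      subst hxs
      have key : ∀ d : A, momAux φ ns ((xs₁ ++ m :: xs₂) ++ d :: ys) =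
          momAux φ p xs₁ * m * momAux φ q (xs₂ ++ d :: ys) := by
        intro d
        rw [← hpe, show (xs₁ ++ m :: xs₂) ++ d :: ys = xs₁ ++ m :: (xs₂ ++ d :: ys) by simp]
        exact momAux_split φ p q xs₁ m (xs₂ ++ d :: ys) hl1
      rw [key, key, momAux_smul φ q xs₂ c a ys (by simp; omega)]
      simp [mul_smul_comm]
  · rw [momAux_of_pos φ hne h0, momAux_of_pos φ hne h0,
      momAux_smul φ (ns.map (· - 1)) xs c a ys (by simp; omega), map_smul]
termination_by ns.length + ns.sum
decreasing_by
  · simp only [List.length_append, List.length_cons, List.sum_append, List.sum_cons] at *; omega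
  · simp only [List.length_append, List.length_cons, List.sum_append, List.sum_cons] at *; omega
  · simp only [List.length_map]
    have h1 := sum_map_pred h0
    have h2 : ns.length ≠ 0 := by simpa using hne
    omega

end Smul

section Family

variable {F : Type*} {A : Type*} [Field F] [Ring A] [Algebra F A]

lemma momAux_nil (φ : A →ₗ[F] A) (as : List A) : momAux φ [] as = 1 := by
  rw [momAux, dif_pos rfl]

lemma momAux_mp1 (φ : A →ₗ[F] A) (ns : List ℕ) (hne : ns ≠ []) (as : List A) :
    φ (momAux φ ns as) = momAux φ (ns.map (· + 1)) as := by
  have h0 : 0 ∉ ns.map (· + 1) := by simp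
  have hne' : ns.map (· + 1) ≠ [] := by simpa using hne
  rw [momAux_of_pos φ hne' h0]
  have : (ns.map (· + 1)).map (· - 1) = ns := by
    rw [List.map_map]
    exact (List.map_congr_left (g := id) (by intro n _; simp)).trans (List.map_id ns)
  rw [this]

/-- The moment polynomial family built from `momAux` (empty tuple ↦ 0). -/
noncomputable def momentFamily (φ : A →ₗ[F] A) : MomentFamily F φ where
  M := fun ns as => if ns = [] then 0 else momAux φ ns as
  map_add := by
    intro ns xs a b ys h
    have hne : ns ≠ [] := by
      intro he; subst he; simp at h
    simp only [if_neg hne]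
    exact momAux_add φ ns xs a b ys h
  map_smul := by
    intro ns xs c a ys h
    have hne : ns ≠ [] := by
      intro he; subst he; simp at h
    simp only [if_neg hne]
    exact momAux_smul φ ns xs c a ys h
  mp1 := by
    intro ns as h
    by_cases hne : ns = []
    · subst hne; simp
    · have hne' : ns.map (· + 1) ≠ [] := by simpa using hne
      simp only [if_neg hne, if_neg hne']
      exact momAux_mp1 φ ns hne as
  mp2_single := by
    intro a
    have := momAux_split φ [] [] [] a [] rfl
    simpa [momAux_nil] using this
  mp2_left := by
    intro ns a as hne hlen
    have := momAux_split φ [] ns [] a as rfl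
    simp only [List.nil_append] at this
    simp only [if_neg (List.cons_ne_nil 0 ns), if_neg hne, this, momAux_nil, one_mul]
  mp2_right := by
    intro ns a as hne hlen
    have := momAux_split φ ns [] as a [] hlen
    have hne' : ns ++ [0] ≠ [] := by simp
    simp only [if_neg hne', if_neg hne, this, momAux_nil, mul_one]
  mp2_mid := by
    intro ns ms a as bs hne hme hlen1 hlen2
    have := momAux_split φ ns ms as a bs hlen1
    have hne' : ns ++ 0 :: ms ≠ [] := by simp
    simp only [if_neg hne', if_neg hne, if_neg hme, this]

theorem mom_unique (φ : A →ₗ[F] A) (Φ Ψ : MomentFamily F φ) (ns : List ℕ) (as : List A)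
    (hne : ns ≠ []) (hlen : as.length = ns.length) : Φ.M ns as = Ψ.M ns as := by
  by_cases h0 : 0 ∈ ns
  · obtain ⟨p, q, hpe, hp1⟩ := exists_first_zero h0
    have hl := congrArg List.length hpe
    simp only [List.length_append, List.length_cons] at hl
    obtain ⟨as₁, m, as₂, has, hl1, hl2⟩ := exists_decomp as 0 p.length (by omega)
    subst has
    have hsum := congrArg List.sum hpe
    simp only [List.sum_append, List.sum_cons] at hsum
    rw [← hpe] at hlen ⊢
    simp only [List.length_append, List.length_cons] at hlen
    by_cases hp : p = [] <;> by_cases hq : q = []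
    · subst hp; subst hq
      obtain rfl : as₁ = [] := List.length_eq_zero_iff.mp (by simpa using hl1)
      obtain rfl : as₂ = [] := List.length_eq_zero_iff.mp
        (by simp only [List.length_nil] at hlen; omega)
      simp only [List.nil_append]
      rw [Φ.mp2_single, Ψ.mp2_single]
    · subst hp
      obtain rfl : as₁ = [] := List.length_eq_zero_iff.mp (by simpa using hl1)
      have hq2 : as₂.length = q.length := by
        simp only [List.length_nil] at hlen; omega
      simp only [List.nil_append]
      rw [Φ.mp2_left q m as₂ hq hq2, Ψ.mp2_left q m as₂ hq hq2,
        mom_unique φ Φ Ψ q as₂ hq hq2]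
    · subst hq
      obtain rfl : as₂ = [] := List.length_eq_zero_iff.mp
        (by simp only [List.length_nil] at hlen; omega)
      have hp2 : as₁.length = p.length := hl1
      rw [Φ.mp2_right p m as₁ hp hp2, Ψ.mp2_right p m as₁ hp hp2,
        mom_unique φ Φ Ψ p as₁ hp hp2]
    · have hq2 : as₂.length = q.length := by omega
      rw [Φ.mp2_mid p q m as₁ as₂ hp hq hl1 hq2, Ψ.mp2_mid p q m as₁ as₂ hp hq hl1 hq2,
        mom_unique φ Φ Ψ p as₁ hp hl1, mom_unique φ Φ Ψ q as₂ hq hq2]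
  · have h1 : (ns.map (· - 1)).map (· + 1) = ns := map_pred_succ h0
    have hne' : ns.map (· - 1) ≠ [] := by simpa using hne
    have hlen' : as.length = (ns.map (· - 1)).length := by simpa using hlen
    rw [← h1, ← Φ.mp1 _ _ hlen', ← Ψ.mp1 _ _ hlen',
      mom_unique φ Φ Ψ (ns.map (· - 1)) as hne' hlen']
termination_by ns.length + ns.sum
decreasing_by all_goals first
  | (simp only [List.length_append, List.length_cons, List.length_nil, List.sum_append,
      List.sum_cons, List.sum_nil] at *; omega)
  | (simp only [List.length_map]
     have h1 := sum_map_pred h0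
     have h2 : ns.length ≠ 0 := by simpa using hne
     omega)

end Family

/-- Existence and uniqueness of the moment polynomials of a linear map
`φ : A → A` on an algebra `A` over a field `F`. -/
theorem moment_polynomials_exist_unique (F : Type*) {A : Type*} [Field F] [Ring A]
    [Algebra F A] (φ : A →ₗ[F] A) :
    (∃ _ : MomentFamily F φ, True) ∧
      ∀ (Φ Ψ : MomentFamily F φ) (ns : List ℕ) (as : List A),
        ns ≠ [] → as.length = ns.length → Φ.M ns as = Ψ.M ns as :=
  ⟨⟨momentFamily φ, trivial⟩, fun Φ Ψ ns as hne hlen => mom_unique φ Φ Ψ ns as hne hlen⟩
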